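/- For any real m×n matrix A there exist infinitely many q ∈ ℤⁿ such that ‖Aq‖_ℤ < |q|^{-n/m}, where ‖Aq‖_ℤ = max_i (distance of (Aq)_i to nearest integer) and |q| is the sup norm. -/

import Mathlib

/-- Distance from a real number to the nearest integer. -/
noncomputable def distZ (x : ℝ) : ℝ := |x - round x|

lemma distZ_nonneg (x : ℝ) : 0 ≤ distZ x := abs_nonneg _

lemma distZ_le_abs_sub_int (x : ℝ) (k : ℤ) : distZ x ≤ |x - k| := by
  rcases lt_or_ge (|x - k|) (1/2) with h | h
  · have hk : round x = k := by
      rw [round_eq]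
      rw [abs_sub_lt_iff] at h
      have h1 : (k : ℝ) ≤ x + 1/2 := by linarith [h.2]
      have h2 : x + 1/2 < (k : ℝ) + 1 := by linarith [h.1]
      exact Int.floor_eq_iff.mpr ⟨h1, h2⟩
    rw [distZ, hk]
  · exact le_trans (abs_sub_round x) h

lemma distZ_le_abs (x : ℝ) : distZ x ≤ |x| := by
  simpa using distZ_le_abs_sub_int x 0

lemma distZ_add_int (x : ℝ) (k : ℤ) : distZ (x + k) = distZ x := by
  rw [distZ, distZ, round_add_intCast]
  congr 1
  push_cast
  ring

lemma distZ_intCast (k : ℤ) : distZ (k : ℝ) = 0 := by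
  simp [distZ]

/-- Dirichlet's theorem (single-step pigeonhole version). -/
lemma dirichlet_step (m n : ℕ) (hm : 0 < m) (hn : 0 < n)
    (A : Matrix (Fin m) (Fin n) ℝ) (Q : ℕ) (hQ : 1 ≤ Q) :
    ∃ q : Fin n → ℤ, q ≠ 0 ∧ (∀ j, |q j| ≤ (⌊(Q : ℝ) ^ ((m : ℝ) / n)⌋₊ : ℤ)) ∧
      ∀ i, distZ (∑ j, A i j * (q j : ℝ)) < 1 / Q := by
  set N : ℕ := ⌊(Q : ℝ) ^ ((m : ℝ) / n)⌋₊ with hNdef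
  have hQ0 : (0 : ℝ) < Q := by exact_mod_cast hQ
  have hcard : Q ^ m < (N + 1) ^ n := by
    have h1 : ((Q : ℝ)) ^ ((m : ℝ) / n) < (N : ℝ) + 1 := by
      simpa using Nat.lt_floor_add_one ((Q : ℝ) ^ ((m : ℝ) / n))
    have h2 : ((Q : ℝ) ^ ((m : ℝ) / n)) ^ (n : ℕ) < ((N : ℝ) + 1) ^ (n : ℕ) := by
      apply pow_lt_pow_left₀ h1 (Real.rpow_nonneg hQ0.le _) hn.ne'
    have h3 : ((Q : ℝ) ^ ((m : ℝ) / n)) ^ (n : ℕ) = (Q : ℝ) ^ m := by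
      rw [← Real.rpow_natCast ((Q : ℝ) ^ ((m : ℝ) / n)) n, ← Real.rpow_mul hQ0.le,
        div_mul_cancel₀, Real.rpow_natCast]
      exact_mod_cast hn.ne'
    rw [h3] at h2
    exact_mod_cast h2
  -- pigeonhole map into boxes
  have hfract_lt : ∀ (x : ℝ), ⌊Int.fract x * Q⌋₊ < Q := by
    intro x
    rw [Nat.floor_lt (mul_nonneg (Int.fract_nonneg x) hQ0.le)]
    calc Int.fract x * Q < 1 * Q := by
          exact mul_lt_mul_of_pos_right (Int.fract_lt_one x) hQ0
      _ = Q := one_mul _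
  set F : (Fin n → Fin (N + 1)) → (Fin m → Fin Q) :=
    fun v i => ⟨⌊Int.fract (∑ j, A i j * ((v j : ℕ) : ℝ)) * Q⌋₊,
      hfract_lt _⟩ with hFdef
  obtain ⟨v, w, hvw, hF⟩ := Fintype.exists_ne_map_eq_of_card_lt F (by
    simpa [Fintype.card_fun] using hcard)
  refine ⟨fun j => ((v j : ℕ) : ℤ) - ((w j : ℕ) : ℤ), ?_, ?_, ?_⟩
  · intro h
    apply hvw
    funext j
    have := congrFun h j
    simp only [Pi.zero_apply, sub_eq_zero] at this
    exact Fin.ext (by exact_mod_cast this)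
  · intro j
    rw [abs_sub_le_iff]
    constructor
    · have h1 : ((v j : ℕ) : ℤ) ≤ N := by exact_mod_cast Nat.lt_succ_iff.mp (v j).isLt
      have h2 : (0 : ℤ) ≤ ((w j : ℕ) : ℤ) := by positivity
      omega
    · have h1 : ((w j : ℕ) : ℤ) ≤ N := by exact_mod_cast Nat.lt_succ_iff.mp (w j).isLt
      have h2 : (0 : ℤ) ≤ ((v j : ℕ) : ℤ) := by positivity
      omega
  · intro i
    set a : ℝ := ∑ j, A i j * ((v j : ℕ) : ℝ) with ha
    set b : ℝ := ∑ j, A i j * ((w j : ℕ) : ℝ) with hb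
    have hsum : (∑ j, A i j * (((((v j : ℕ) : ℤ)) - ((w j : ℕ) : ℤ) : ℤ) : ℝ)) = a - b := by
      rw [ha, hb, ← Finset.sum_sub_distrib]
      congr 1
      funext j
      push_cast
      ring
    rw [hsum]
    have hFi : ⌊Int.fract a * Q⌋₊ = ⌊Int.fract b * Q⌋₊ := by
      have := congrFun hF i
      simpa [hFdef, Fin.ext_iff] using this
    -- |fract a - fract b| < 1/Q
    have habs : |Int.fract a - Int.fract b| < 1 / Q := by
      have h1 : ((⌊Int.fract a * Q⌋₊ : ℕ) : ℝ) ≤ Int.fract a * Q :=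
        Nat.floor_le (mul_nonneg (Int.fract_nonneg _) hQ0.le)
      have h2 : Int.fract a * Q < (⌊Int.fract a * Q⌋₊ : ℕ) + 1 := Nat.lt_floor_add_one _
      have h3 : ((⌊Int.fract a * Q⌋₊ : ℕ) : ℝ) ≤ Int.fract b * Q := by
        rw [hFi]; exact Nat.floor_le (mul_nonneg (Int.fract_nonneg _) hQ0.le)
      have h4 : Int.fract b * Q < ((⌊Int.fract a * Q⌋₊ : ℕ) : ℝ) + 1 := by
        rw [hFi]; exact Nat.lt_floor_add_one _
      rw [abs_sub_lt_iff]
      constructor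
      · rw [sub_lt_iff_lt_add]
        have : Int.fract a * Q < Int.fract b * Q + 1 := by linarith
        rw [div_add' _ _ _ hQ0.ne', lt_div_iff₀ hQ0]
        linarith
      · rw [sub_lt_iff_lt_add]
        have : Int.fract b * Q < Int.fract a * Q + 1 := by linarith
        rw [div_add' _ _ _ hQ0.ne', lt_div_iff₀ hQ0]
        linarith
    have hab : a - b = (Int.fract a - Int.fract b) + ((⌊a⌋ - ⌊b⌋ : ℤ) : ℝ) := by
      rw [Int.fract, Int.fract]
      push_cast
      ring
    calc distZ (a - b) = distZ (Int.fract a - Int.fract b) := by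
          rw [hab, distZ_add_int]
      _ ≤ |Int.fract a - Int.fract b| := distZ_le_abs _
      _ < 1 / Q := habs

/-- Corollary of Dirichlet's theorem: for any real `m × n` matrix `A` there are infinitely many
`q ∈ ℤⁿ` with `‖Aq‖_ℤ < |q|^{-n/m}`. -/
theorem dirichlet_corollary (m n : ℕ) (hm : 0 < m) (hn : 0 < n)
    (A : Matrix (Fin m) (Fin n) ℝ) :
    {q : Fin n → ℤ |
      (⨆ i, distZ (∑ j, A i j * (q j : ℝ))) < (⨆ j, |(q j : ℝ)|) ^ (-(n : ℝ) / m)}.Infinite := by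
  have hmR : (0 : ℝ) < m := by exact_mod_cast hm
  have hnR : (0 : ℝ) < n := by exact_mod_cast hn
  haveI : Nonempty (Fin m) := ⟨⟨0, hm⟩⟩
  haveI : Nonempty (Fin n) := ⟨⟨0, hn⟩⟩
  set S := {q : Fin n → ℤ |
      (⨆ i, distZ (∑ j, A i j * (q j : ℝ))) < (⨆ j, |(q j : ℝ)|) ^ (-(n : ℝ) / m)} with hS
  -- membership of the Dirichlet solutions
  have hmem : ∀ Q : ℕ, 1 ≤ Q → ∀ q : Fin n → ℤ, q ≠ 0 →
      (∀ j, |q j| ≤ (⌊(Q : ℝ) ^ ((m : ℝ) / n)⌋₊ : ℤ)) →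
      (∀ i, distZ (∑ j, A i j * (q j : ℝ)) < 1 / Q) → q ∈ S := by
    intro Q hQ q hq0 hqle hqlt
    have hQ0 : (0 : ℝ) < Q := by exact_mod_cast hQ
    set B := ⨆ j, |(q j : ℝ)| with hB
    have hbdd : BddAbove (Set.range fun j => |(q j : ℝ)|) :=
      (Set.finite_range _).bddAbove
    obtain ⟨j0, hj0⟩ : ∃ j, q j ≠ 0 := by
      by_contra h
      push_neg at h
      exact hq0 (funext h)
    have hB1 : (1 : ℝ) ≤ B := by
      refine le_trans ?_ (le_ciSup hbdd j0)
      have := Int.one_le_abs hj0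
      exact_mod_cast this
    have hB0 : (0 : ℝ) < B := lt_of_lt_of_le one_pos hB1
    have hBle : B ≤ (Q : ℝ) ^ ((m : ℝ) / n) := by
      apply ciSup_le
      intro j
      calc |(q j : ℝ)| ≤ ((⌊(Q : ℝ) ^ ((m : ℝ) / n)⌋₊ : ℤ) : ℝ) := by
            rw [← Int.cast_abs]; exact_mod_cast hqle j
        _ ≤ (Q : ℝ) ^ ((m : ℝ) / n) := by
            push_cast
            exact Nat.floor_le (Real.rpow_nonneg hQ0.le _)
    have hpow : B ^ ((n : ℝ) / m) ≤ Q := by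
      calc B ^ ((n : ℝ) / m) ≤ ((Q : ℝ) ^ ((m : ℝ) / n)) ^ ((n : ℝ) / m) :=
            Real.rpow_le_rpow hB0.le hBle (by positivity)
        _ = (Q : ℝ) ^ (((m : ℝ) / n) * ((n : ℝ) / m)) := by
            rw [← Real.rpow_mul hQ0.le]
        _ = Q := by
            rw [show ((m : ℝ) / n) * ((n : ℝ) / m) = 1 by field_simp, Real.rpow_one]
    have hQB : (1 : ℝ) / Q ≤ B ^ (-(n : ℝ) / m) := by
      rw [neg_div, Real.rpow_neg hB0.le, one_div]
      apply inv_anti₀ (Real.rpow_pos_of_pos hB0 _)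
      exact hpow
    rw [hS, Set.mem_setOf_eq]
    obtain ⟨i0, hi0⟩ := exists_eq_ciSup_of_finite
      (f := fun i => distZ (∑ j, A i j * (q j : ℝ)))
    rw [← hi0]
    exact lt_of_lt_of_le (hqlt i0) hQB
  -- zero is not in S
  have hzero : (0 : Fin n → ℤ) ∉ S := by
    rw [hS, Set.mem_setOf_eq]
    simp only [Pi.zero_apply, Int.cast_zero, mul_zero, Finset.sum_const_zero, abs_zero]
    rw [ciSup_const, ciSup_const, distZ, round_zero]
    rw [Real.zero_rpow (by
      rw [neg_div, neg_ne_zero]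
      positivity)]
    simp
  -- case split: either some nonzero q has Aq integral, or not
  by_cases hint : ∃ q : Fin n → ℤ, q ≠ 0 ∧ ∀ i, distZ (∑ j, A i j * (q j : ℝ)) = 0
  · obtain ⟨q, hq0, hq⟩ := hint
    obtain ⟨j0, hj0⟩ : ∃ j, q j ≠ 0 := by
      by_contra h
      push_neg at h
      exact hq0 (funext h)
    refine Set.infinite_of_injective_forall_mem
      (f := fun k : ℕ => fun j => ((k : ℤ) + 1) * q j) ?_ ?_
    · intro k l hkl
      have := congrFun hkl j0
      simp only at this
      have : (k : ℤ) + 1 = (l : ℤ) + 1 := by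
        exact mul_right_cancel₀ hj0 this
      omega
    · intro k
      rw [hS, Set.mem_setOf_eq]
      have hLHS : ∀ i, distZ (∑ j, A i j * ((((k : ℤ) + 1) * q j : ℤ) : ℝ)) = 0 := by
        intro i
        have h1 : ∀ i, ∃ r : ℤ, (∑ j, A i j * (q j : ℝ)) = r := by
          intro i
          have := hq i
          rw [distZ, abs_eq_zero, sub_eq_zero] at this
          exact ⟨round _, this⟩
        obtain ⟨r, hr⟩ := h1 i
        have hsum : (∑ j, A i j * ((((k : ℤ) + 1) * q j : ℤ) : ℝ))
            = (((k : ℤ) + 1) : ℝ) * ∑ j, A i j * (q j : ℝ) := by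
          rw [Finset.mul_sum]
          congr 1
          funext j
          push_cast
          ring
        rw [hsum, hr, show (((k : ℤ) + 1) : ℝ) * (r : ℝ) = ((((k : ℤ) + 1) * r : ℤ) : ℝ) by
          push_cast; ring]
        exact distZ_intCast _
      have hsup0 : (⨆ i, distZ (∑ j, A i j * ((((k : ℤ) + 1) * q j : ℤ) : ℝ))) = 0 := by
        simp only [hLHS]
        exact ciSup_const
      rw [hsup0]
      apply Real.rpow_pos_of_pos
      have hbdd : BddAbove (Set.range fun j => |((((k : ℤ) + 1) * q j : ℤ) : ℝ)|) :=
        (Set.finite_range _).bddAbove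
      refine lt_of_lt_of_le one_pos (le_trans ?_ (le_ciSup hbdd j0))
      have : (1 : ℤ) ≤ |((k : ℤ) + 1) * q j0| := Int.one_le_abs (by
        exact mul_ne_zero (by omega) hj0)
      rw [← Int.cast_abs]
      exact_mod_cast this
  · -- no nonzero integral solution: Dirichlet gives infinitely many
    push_neg at hint
    by_contra hfin
    rw [Set.not_infinite] at hfin
    -- every element of S has positive sup-dist
    have hpos : ∀ q ∈ S, 0 < ⨆ i, distZ (∑ j, A i j * (q j : ℝ)) := by
      intro q hqS
      have hq0 : q ≠ 0 := fun h => hzero (h ▸ hqS)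
      obtain ⟨i0, hi0⟩ := hint q hq0
      have hbdd : BddAbove (Set.range fun i => distZ (∑ j, A i j * (q j : ℝ))) :=
        (Set.finite_range _).bddAbove
      refine lt_of_lt_of_le ?_ (le_ciSup hbdd i0)
      exact lt_of_le_of_ne (distZ_nonneg _) (Ne.symm hi0)
    -- S is nonempty (take Q = 1)
    obtain ⟨q1, hq10, hq1le, hq1lt⟩ := dirichlet_step m n hm hn A 1 le_rfl
    have hq1S : q1 ∈ S := hmem 1 le_rfl q1 hq10 hq1le hq1lt
    set F := hfin.toFinset with hF
    have hFne : F.Nonempty := ⟨q1, hfin.mem_toFinset.mpr hq1S⟩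
    set ε := F.inf' hFne (fun q => ⨆ i, distZ (∑ j, A i j * (q j : ℝ))) with hε
    have hε0 : 0 < ε := by
      rw [hε]
      rw [Finset.lt_inf'_iff]
      intro q hqF
      exact hpos q (hfin.mem_toFinset.mp hqF)
    obtain ⟨Q', hQ'⟩ := exists_nat_one_div_lt hε0
    obtain ⟨q, hq0, hqle, hqlt⟩ := dirichlet_step m n hm hn A (Q' + 1) (by omega)
    have hqS : q ∈ S := hmem (Q' + 1) (by omega) q hq0 hqle hqlt
    have h1 : ε ≤ ⨆ i, distZ (∑ j, A i j * (q j : ℝ)) :=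
      Finset.inf'_le _ (hfin.mem_toFinset.mpr hqS)
    obtain ⟨i0, hi0⟩ := exists_eq_ciSup_of_finite
      (f := fun i => distZ (∑ j, A i j * (q j : ℝ)))
    have h2 : (⨆ i, distZ (∑ j, A i j * (q j : ℝ))) < 1 / ((Q' : ℝ) + 1) := by
      rw [← hi0]
      have := hqlt i0
      push_cast at this ⊢
      linarith
    linarith
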